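/- If g and h are conjugate elements of a finite group G, then for any representation φ of G, the operators D_g and D_h act identically on the polynomial det(Σ_{k∈G} φ(k) x_k): D_g det(Σ φ(k)x_k) = D_h det(Σ φ(k)x_k). -/

import Mathlib

open MvPolynomial

/-- The Frobenius differential operator `D_g f = ∑_{k ∈ G} x_{g⁻¹ k} ∂f/∂x_k`. -/
noncomputable def Dop {G : Type*} [Group G] [Fintype G] (g : G)
    (f : MvPolynomial G ℂ) : MvPolynomial G ℂ :=
  ∑ k : G, X (g⁻¹ * k) * pderiv k f

/-- The matrix `X = ∑_{k ∈ G} φ(k) x_k` with entries in the polynomial ring. -/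
noncomputable def repMatrix {G : Type*} [Group G] [Fintype G] {d : ℕ}
    (φ : G →* Matrix (Fin d) (Fin d) ℂ) : Matrix (Fin d) (Fin d) (MvPolynomial G ℂ) :=
  ∑ k : G, (X k : MvPolynomial G ℂ) • (φ k).map C

set_option linter.unusedSectionVars false

section DerivationLemmas

variable {R A : Type*} [CommRing R] [CommRing A] [Algebra R A]

lemma Derivation.map_finset_prod (D : Derivation R A A) {ι : Type*} [DecidableEq ι]
    (s : Finset ι) (f : ι → A) :
    D (∏ i ∈ s, f i) = ∑ i ∈ s, (∏ j ∈ s.erase i, f j) * D (f i) := by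
  induction s using Finset.induction with
  | empty => simp
  | @insert a s ha ih =>
      rw [Finset.prod_insert ha, D.leibniz, Finset.sum_insert ha]
      rw [Finset.erase_insert ha]
      have h1 : ∀ i ∈ s, (∏ j ∈ (insert a s).erase i, f j) * D (f i)
          = f a * ((∏ j ∈ s.erase i, f j) * D (f i)) := by
        intro i hi
        have hai : a ≠ i := fun e => ha (e ▸ hi)
        rw [Finset.erase_insert_of_ne hai,
          Finset.prod_insert (fun hmem => ha (Finset.mem_of_mem_erase hmem)), mul_assoc]
      rw [Finset.sum_congr rfl h1, ← Finset.mul_sum, ← ih]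
      simp [smul_eq_mul, mul_comm, add_comm]

lemma Derivation.map_det {n : Type*} [DecidableEq n] [Fintype n]
    (D : Derivation R A A) (M : Matrix n n A) :
    D M.det = ∑ i, (M.updateRow i (fun j => D (M i j))).det := by
  rw [Matrix.det_apply, map_sum]
  have key : ∀ i : n, (M.updateRow i (fun j => D (M i j))).det
      = ∑ σ : Equiv.Perm n, Equiv.Perm.sign σ •
          (D (M (σ (σ⁻¹ i)) (σ⁻¹ i)) * ∏ j ∈ Finset.univ.erase (σ⁻¹ i), M (σ j) j) := by
    intro i
    rw [Matrix.det_apply]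
    refine Finset.sum_congr rfl fun σ _ => ?_
    congr 1
    rw [← Finset.mul_prod_erase Finset.univ _ (Finset.mem_univ (σ⁻¹ i))]
    congr 1
    · rw [Matrix.updateRow_apply, if_pos (by simp), Equiv.Perm.coe_inv, Equiv.apply_symm_apply]
    · refine Finset.prod_congr rfl fun j hj => ?_
      rw [Matrix.updateRow_apply, if_neg]
      intro e
      exact (Finset.mem_erase.mp hj).1 (by rw [← e, Equiv.Perm.coe_inv, Equiv.symm_apply_apply])
  rw [Finset.sum_congr rfl fun i _ => key i, Finset.sum_comm]
  refine Finset.sum_congr rfl fun σ _ => ?_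
  rw [← Finset.smul_sum, D.map_smul_of_tower, Derivation.map_finset_prod]
  congr 1
  refine Fintype.sum_equiv σ _ _ fun j => ?_
  simp only [Equiv.Perm.coe_inv, Equiv.symm_apply_apply]
  ring

end DerivationLemmas

section Main

variable {G : Type*} [Group G] [Fintype G] [DecidableEq G]

/-- `Dop g` as a bona fide derivation. -/
noncomputable def Dder (g : G) :
    Derivation ℂ (MvPolynomial G ℂ) (MvPolynomial G ℂ) :=
  ∑ k : G, (X (g⁻¹ * k) : MvPolynomial G ℂ) • pderiv k

lemma Dder_apply (g : G) (f : MvPolynomial G ℂ) :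
    Dder g f = ∑ k : G, X (g⁻¹ * k) * pderiv k f := by
  rw [Dder, show ⇑(∑ k : G, (X (g⁻¹ * k) : MvPolynomial G ℂ) • pderiv k)
      = ∑ k : G, ⇑((X (g⁻¹ * k) : MvPolynomial G ℂ) • pderiv k) from
    map_sum (Derivation.coeFnAddMonoidHom :
      Derivation ℂ (MvPolynomial G ℂ) (MvPolynomial G ℂ) →+ _) _ _]
  simp [Derivation.coe_smul, smul_eq_mul]

lemma Dop_eq_Dder (g : G) (f : MvPolynomial G ℂ) : Dop g f = Dder g f := by
  rw [Dop, Dder_apply]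

lemma Dder_X (g k : G) : Dder g (X k : MvPolynomial G ℂ) = X (g⁻¹ * k) := by
  rw [Dder_apply]
  simp [pderiv_X, Pi.single_apply]

lemma Dder_C (g : G) (a : ℂ) : Dder g (C a : MvPolynomial G ℂ) = 0 := by
  rw [Dder_apply]
  simp

noncomputable def Nmat {d : ℕ} (φ : G →* Matrix (Fin d) (Fin d) ℂ) (g : G) :
    Matrix (Fin d) (Fin d) (MvPolynomial G ℂ) := (φ g).map C

lemma Nmat_apply {d : ℕ} (φ : G →* Matrix (Fin d) (Fin d) ℂ) (g : G) (i j : Fin d) :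
    Nmat φ g i j = C (φ g i j) := rfl

lemma repMatrix_apply {d : ℕ} (φ : G →* Matrix (Fin d) (Fin d) ℂ) (i j : Fin d) :
    repMatrix φ i j = ∑ k : G, (X k : MvPolynomial G ℂ) * C (φ k i j) := by
  simp [repMatrix, Matrix.sum_apply, Matrix.smul_apply, Matrix.map_apply, smul_eq_mul]

lemma Dder_entry {d : ℕ} (φ : G →* Matrix (Fin d) (Fin d) ℂ) (g : G) (i j : Fin d) :
    Dder g (repMatrix φ i j) = (Nmat φ g * repMatrix φ) i j := by
  rw [repMatrix_apply, map_sum]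
  have h1 : ∀ k : G, Dder g ((X k : MvPolynomial G ℂ) * C (φ k i j))
      = X (g⁻¹ * k) * C (φ k i j) := by
    intro k
    rw [Derivation.leibniz, Dder_C, smul_zero, zero_add, Dder_X, smul_eq_mul, mul_comm]
  rw [Finset.sum_congr rfl fun k _ => h1 k]
  have h2 : (Nmat φ g * repMatrix φ) i j
      = ∑ k : G, (X k : MvPolynomial G ℂ) * C (φ (g * k) i j) := by
    rw [Matrix.mul_apply]
    have : ∀ l : Fin d, Nmat φ g i l * repMatrix φ l j
        = ∑ k : G, (X k : MvPolynomial G ℂ) * (C (φ g i l) * C (φ k l j)) := by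
      intro l
      rw [Nmat_apply, repMatrix_apply, Finset.mul_sum]
      exact Finset.sum_congr rfl fun k _ => by ring
    rw [Finset.sum_congr rfl fun l _ => this l, Finset.sum_comm]
    refine Finset.sum_congr rfl fun k _ => ?_
    rw [← Finset.mul_sum]
    congr 1
    have hC : ∑ l : Fin d, C (φ g i l) * C (φ k l j)
        = (C (∑ l : Fin d, φ g i l * φ k l j) : MvPolynomial G ℂ) := by
      rw [map_sum]
      exact Finset.sum_congr rfl fun l _ => (map_mul C _ _).symm
    rw [hC, map_mul φ, Matrix.mul_apply]
  rw [h2]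
  refine Fintype.sum_equiv (Equiv.mulLeft g⁻¹) _ _ fun k => ?_
  simp

lemma Dder_det {d : ℕ} (φ : G →* Matrix (Fin d) (Fin d) ℂ) (g : G) :
    Dder g (repMatrix φ).det = C (Matrix.trace (φ g)) * (repMatrix φ).det := by
  set M := repMatrix φ with hM
  rw [Derivation.map_det]
  have h1 : ∀ i : Fin d, (M.updateRow i (fun j => Dder g (M i j))).det
      = C (φ g i i) * M.det := by
    intro i
    have hrow : (fun j => Dder g (M i j)) = ∑ l, (C (φ g i l) : MvPolynomial G ℂ) • M l := by
      funext j
      rw [Dder_entry φ g i j, Matrix.mul_apply]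
      simp [Nmat_apply, smul_eq_mul, Finset.sum_apply, hM]
    rw [hrow, Matrix.det_updateRow_sum M i (fun l => C (φ g i l)), smul_eq_mul]
  rw [Finset.sum_congr rfl fun i _ => h1 i, ← Finset.sum_mul, ← map_sum]
  rfl

lemma trace_conj {d : ℕ} (φ : G →* Matrix (Fin d) (Fin d) ℂ) {g h : G} (hconj : IsConj g h) :
    Matrix.trace (φ g) = Matrix.trace (φ h) := by
  obtain ⟨c, hc⟩ := hconj
  have he : h = (c : G) * g * (c : G)⁻¹ := by
    rw [eq_mul_inv_iff_mul_eq]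
    exact hc.eq.symm
  rw [he, map_mul, map_mul, Matrix.trace_mul_comm, ← Matrix.mul_assoc, ← map_mul,
    inv_mul_cancel, map_one, Matrix.one_mul]

end Main

theorem Dop_conj_eq {G : Type*} [Group G] [Fintype G] [DecidableEq G] {d : ℕ}
    (φ : G →* Matrix (Fin d) (Fin d) ℂ) (g h : G) (hconj : IsConj g h) :
    Dop g (repMatrix φ).det = Dop h (repMatrix φ).det := by
  rw [Dop_eq_Dder, Dop_eq_Dder, Dder_det, Dder_det, trace_conj φ hconj]
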